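/- Let q be a prime power, n | q−1, and α ∈ F_q a primitive n-th root of unity. Let r, k be positive integers with r | k, (r+1) | n, μ = k/r, and μ(r+1) ≤ n. Let l be an integer with 0 ≤ l ≤ r and b ≥ 1 an integer with gcd(b,n) = 1. Define L = {α^i : i ≡ l (mod r+1)} and D = {α^{j+sb} : s = 0, 1, …, n−μ(r+1)}, where j is an integer with α^j ∈ L. Then the cyclic code over F_q with defining set of zeros L ∪ D is an optimal (n,k,r) cyclic LRC code: it has dimension k, locality r, and minimum distance d = n − k − k/r + 2. -/

import Mathlib

set_option linter.unusedSectionVars false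
set_option linter.unusedVariables false
set_option maxHeartbeats 1000000


open scoped BigOperators

namespace LRC

/-- Hamming weight of a vector. -/
noncomputable def hwt {n : ℕ} {F : Type*} [Zero F] (c : Fin n → F) : ℕ :=
  Nat.card {i : Fin n // c i ≠ 0}

/-- A linear code is cyclic if it is closed under the cyclic shift of coordinates. -/
def IsCyclicCode {n : ℕ} [NeZero n] {F : Type*} [Field F] (C : Submodule F (Fin n → F)) : Prop :=
  ∀ c ∈ C, (fun i : Fin n => c (i - 1)) ∈ C

/-- `A` is a recovery set for coordinate `i` of the code `C`. -/
def IsRecoverySet {n : ℕ} {F : Type*} [Field F] (C : Submodule F (Fin n → F)) (i : Fin n)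
    (A : Finset (Fin n)) : Prop :=
  i ∉ A ∧ ∃ φ : ((j : A) → F) → F, ∀ c ∈ C, c i = φ (fun j => c j)

/-- The code `C` has locality `r`. -/
def HasLocality {n : ℕ} {F : Type*} [Field F] (C : Submodule F (Fin n → F)) (r : ℕ) : Prop :=
  ∀ i : Fin n, ∃ A : Finset (Fin n), A.card ≤ r ∧ IsRecoverySet C i A

/-- Complete defining set of zeros of a cyclic code (locator field = symbol field). -/
def definingSet {n : ℕ} {F : Type*} [Field F] (C : Submodule F (Fin n → F)) : Set F :=
  {β | β ^ n = 1 ∧ ∀ c ∈ C, ∑ j : Fin n, c j * β ^ (j : ℕ) = 0}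

/-- Complete defining set of zeros of a cyclic code in an extension (locator) field `K`. -/
def definingSetExt (n : ℕ) {F K : Type*} [Field F] [Field K] [Algebra F K]
    (C : Submodule F (Fin n → F)) : Set K :=
  {β | β ^ n = 1 ∧ ∀ c ∈ C, ∑ j : Fin n, algebraMap F K (c j) * β ^ (j : ℕ) = 0}

/-- The cyclic code with a given set of zeros. -/
def codeOfZeros (n : ℕ) {F : Type*} [Field F] (Z : Set F) : Submodule F (Fin n → F) where
  carrier := {c | ∀ β ∈ Z, ∑ j : Fin n, c j * β ^ (j : ℕ) = 0}
  add_mem' := by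
    intro a b ha hb β hβ
    have h1 := ha β hβ
    have h2 := hb β hβ
    calc ∑ j : Fin n, (a + b) j * β ^ (j : ℕ)
        = (∑ j : Fin n, a j * β ^ (j : ℕ)) + ∑ j : Fin n, b j * β ^ (j : ℕ) := by
          rw [← Finset.sum_add_distrib]
          exact Finset.sum_congr rfl (by intro j _; simp [add_mul])
      _ = 0 := by rw [h1, h2, add_zero]
  zero_mem' := by intro β hβ; simp
  smul_mem' := by
    intro t a ha β hβ
    have h1 := ha β hβ
    calc ∑ j : Fin n, (t • a) j * β ^ (j : ℕ)
        = t * ∑ j : Fin n, a j * β ^ (j : ℕ) := by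
          rw [Finset.mul_sum]
          exact Finset.sum_congr rfl (by intro j _; simp [mul_assoc])
      _ = 0 := by rw [h1, mul_zero]

/-- Minimum distance: least Hamming weight of a nonzero codeword. -/
noncomputable def minDist {n : ℕ} {F : Type*} [Field F] (C : Submodule F (Fin n → F)) : ℕ :=
  sInf {w | ∃ c ∈ C, c ≠ 0 ∧ hwt c = w}

/-- The dual code under the standard bilinear form. -/
def dualCode {n : ℕ} {F : Type*} [Field F] (C : Submodule F (Fin n → F)) :
    Submodule F (Fin n → F) where
  carrier := {y | ∀ c ∈ C, ∑ i : Fin n, c i * y i = 0}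
  add_mem' := by
    intro a b ha hb c hc
    have h1 := ha c hc
    have h2 := hb c hc
    calc ∑ i : Fin n, c i * (a + b) i
        = (∑ i : Fin n, c i * a i) + ∑ i : Fin n, c i * b i := by
          rw [← Finset.sum_add_distrib]
          exact Finset.sum_congr rfl (by intro j _; simp [mul_add])
      _ = 0 := by rw [h1, h2, add_zero]
  zero_mem' := by intro c hc; simp
  smul_mem' := by
    intro t a ha c hc
    have h1 := ha c hc
    calc ∑ i : Fin n, c i * (t • a) i
        = t * ∑ i : Fin n, c i * a i := by
          rw [Finset.mul_sum]
          exact Finset.sum_congr rfl (by intro j _; simp [mul_assoc]; ring)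
      _ = 0 := by rw [h1, mul_zero]



section AuxLRC


variable {F : Type*} [Field F] {n : ℕ} [NeZero n] {α : F}

/-- power of α indexed by `ZMod n`. -/
def ap (α : F) {n : ℕ} [NeZero n] (e : ZMod n) : F := α ^ e.val

lemma pow_mod (hα : IsPrimitiveRoot α n) (a : ℕ) : α ^ (a % n) = α ^ a := by
  conv_rhs => rw [← Nat.div_add_mod a n]
  rw [pow_add, pow_mul, hα.pow_eq_one, one_pow, one_mul]

lemma ap_natCast (hα : IsPrimitiveRoot α n) (a : ℕ) : ap α (a : ZMod n) = α ^ a := by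
  rw [ap, ZMod.val_natCast, pow_mod hα]

lemma ap_add (hα : IsPrimitiveRoot α n) (x y : ZMod n) :
    ap α (x + y) = ap α x * ap α y := by
  have hx : ((x.val : ℕ) : ZMod n) = x := ZMod.natCast_rightInverse x
  have hy : ((y.val : ℕ) : ZMod n) = y := ZMod.natCast_rightInverse y
  have : x + y = ((x.val + y.val : ℕ) : ZMod n) := by push_cast [hx, hy]; ring
  rw [this, ap_natCast hα, pow_add, ap, ap]

lemma ap_zero : ap (α := α) (n := n) 0 = 1 := by
  simp [ap]

lemma ap_mul_natCast (hα : IsPrimitiveRoot α n) (x : ZMod n) (m : ℕ) :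
    ap α (x * (m : ZMod n)) = (ap α x) ^ m := by
  induction m with
  | zero => simp [ap_zero]
  | succ m ih =>
      have : x * ((m+1 : ℕ) : ZMod n) = x * (m : ZMod n) + x := by push_cast; ring
      rw [this, ap_add hα, ih, pow_succ]

lemma alpha_ne_zero (hα : IsPrimitiveRoot α n) : α ≠ 0 := by
  intro h
  have := hα.pow_eq_one
  rw [h, zero_pow (NeZero.ne n)] at this
  exact zero_ne_one this

lemma ap_ne_zero (hα : IsPrimitiveRoot α n) (e : ZMod n) : ap α e ≠ 0 :=
  pow_ne_zero _ (alpha_ne_zero hα)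

lemma ap_eq_one (hα : IsPrimitiveRoot α n) (e : ZMod n) : ap α e = 1 ↔ e = 0 := by
  rw [ap, hα.pow_eq_one_iff_dvd]
  constructor
  · intro h
    have := Nat.eq_zero_of_dvd_of_lt h (ZMod.val_lt e)
    · exact (ZMod.val_eq_zero e).mp (by omega)
  · rintro rfl; simp [ZMod.val_zero]

lemma ap_inj (hα : IsPrimitiveRoot α n) : Function.Injective (ap (α := α) (n := n)) := by
  intro x y h
  have := hα.pow_inj (ZMod.val_lt x) (ZMod.val_lt y) h
  have hx : ((x.val : ℕ) : ZMod n) = x := ZMod.natCast_rightInverse x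
  have hy : ((y.val : ℕ) : ZMod n) = y := ZMod.natCast_rightInverse y
  rw [← hx, ← hy, this]

lemma sum_ap (hα : IsPrimitiveRoot α n) (t : ZMod n) :
    ∑ i : Fin n, ap α (t * ((i : ℕ) : ZMod n)) = if t = 0 then (n : F) else 0 := by
  have key : ∀ i : Fin n, ap α (t * ((i : ℕ) : ZMod n)) = (ap α t) ^ (i : ℕ) :=
    fun i => ap_mul_natCast hα t i
  simp only [key]
  split_ifs with ht
  · subst ht; simp [ap_zero]
  · have hne : ap α t ≠ 1 := fun h => ht ((ap_eq_one hα t).mp h)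
    have hpow : (ap α t) ^ n = 1 := by
      rw [← ap_mul_natCast hα t n, ZMod.natCast_self, mul_zero, ap_zero]
    rw [Fin.sum_univ_eq_sum_range (fun i => (ap α t) ^ i) n, geom_sum_eq hne, hpow]
    simp

lemma n_ne_zero_F {q : ℕ} [Fintype F] (hq : Fintype.card F = q) (hn : n ∣ q - 1) :
    (n : F) ≠ 0 := by
  intro h
  have hp : ringChar F ∣ n := (ringChar.spec F n).mp h
  have hq0 : ((q : ℕ) : F) = 0 := by rw [← hq]; exact FiniteField.cast_card_eq_zero F
  have hpq : ringChar F ∣ q := (ringChar.spec F q).mp hq0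
  have h2 : 2 ≤ q := hq ▸ Fintype.one_lt_card
  have hprime : (ringChar F).Prime := by
    have := CharP.char_is_prime F (ringChar F)
    exact this
  have hdvd1 : ringChar F ∣ 1 := by
    have h3 : ringChar F ∣ q - 1 := hp.trans hn
    have h4 := Nat.dvd_sub hpq h3
    rwa [Nat.sub_sub_self (by omega : 1 ≤ q)] at h4
  exact absurd (Nat.dvd_one.mp hdvd1) hprime.one_lt.ne'



def ElF (n r l : ℕ) : Finset (ZMod n) :=
  (Finset.range (n/(r+1))).image (fun t => ((l + t*(r+1) : ℕ) : ZMod n))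

def EDF (n j b M : ℕ) : Finset (ZMod n) :=
  (Finset.range M).image (fun s => ((j + s*b : ℕ) : ZMod n))

variable {n r l j b M : ℕ} [NeZero n]

lemma lt_of_mem_range_aux (hrn : (r+1) ∣ n) (hl : l ≤ r) {t : ℕ} (ht : t < n/(r+1)) :
    l + t*(r+1) < n := by
  have hc : (n/(r+1)) * (r+1) = n := Nat.div_mul_cancel hrn
  have h1 : (t+1)*(r+1) ≤ (n/(r+1))*(r+1) := Nat.mul_le_mul_right _ (by omega)
  have h2 : (t+1)*(r+1) = t*(r+1) + (r+1) := by ring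
  omega

lemma mem_ElF (hrn : (r+1) ∣ n) (hl : l ≤ r) {x : ZMod n} :
    x ∈ ElF n r l ↔ x.val % (r+1) = l := by
  constructor
  · intro hx
    obtain ⟨t, ht, rfl⟩ := Finset.mem_image.mp hx
    rw [Finset.mem_range] at ht
    rw [ZMod.val_natCast, Nat.mod_eq_of_lt (lt_of_mem_range_aux hrn hl ht),
      Nat.add_mul_mod_self_right, Nat.mod_eq_of_lt (by omega)]
  · intro hx
    have hvn : x.val < n := ZMod.val_lt x
    have hdm : (r+1) * (x.val / (r+1)) + x.val % (r+1) = x.val := Nat.div_add_mod x.val (r+1)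
    have htlt : x.val / (r+1) < n/(r+1) := Nat.div_lt_div_of_lt_of_dvd hrn hvn
    refine Finset.mem_image.mpr ⟨x.val/(r+1), Finset.mem_range.mpr htlt, ?_⟩
    have hval : l + (x.val/(r+1))*(r+1) = x.val := by
      rw [mul_comm]; omega
    rw [hval]
    exact ZMod.natCast_rightInverse x

lemma card_ElF (hrn : (r+1) ∣ n) (hl : l ≤ r) : (ElF n r l).card = n/(r+1) := by
  rw [ElF, Finset.card_image_of_injOn, Finset.card_range]
  intro t₁ h₁ t₂ h₂ he
  rw [Finset.mem_coe, Finset.mem_range] at h₁ h₂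
  have v1 := lt_of_mem_range_aux hrn hl h₁
  have v2 := lt_of_mem_range_aux hrn hl h₂
  have he' : ((l + t₁*(r+1) : ℕ) : ZMod n) = ((l + t₂*(r+1) : ℕ) : ZMod n) := he
  have hval := congrArg ZMod.val he'
  rw [ZMod.val_natCast, ZMod.val_natCast, Nat.mod_eq_of_lt v1, Nat.mod_eq_of_lt v2] at hval
  have : t₁ * (r+1) = t₂ * (r+1) := by omega
  exact Nat.eq_of_mul_eq_mul_right (by omega) this

lemma EDF_inj_aux (hbn : Nat.Coprime b n) (hM : M ≤ n) {s₁ s₂ : ℕ}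
    (h₁ : s₁ < M) (h₂ : s₂ < M)
    (he : ((j + s₁*b : ℕ) : ZMod n) = ((j + s₂*b : ℕ) : ZMod n)) : s₁ = s₂ := by
  have hmod : j + s₁*b ≡ j + s₂*b [MOD n] := (ZMod.natCast_eq_natCast_iff _ _ _).mp he
  have hmod2 : s₁ * b ≡ s₂ * b [MOD n] := Nat.ModEq.add_left_cancel' j hmod
  have hmod3 : s₁ ≡ s₂ [MOD n] := Nat.ModEq.cancel_right_of_coprime hbn.symm hmod2
  have h4 : s₁ % n = s₂ % n := hmod3
  rw [Nat.mod_eq_of_lt (by omega), Nat.mod_eq_of_lt (by omega)] at h4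
  exact h4

lemma card_EDF (hbn : Nat.Coprime b n) (hM : M ≤ n) : (EDF n j b M).card = M := by
  rw [EDF, Finset.card_image_of_injOn, Finset.card_range]
  intro s₁ h₁ s₂ h₂ he
  rw [Finset.mem_coe, Finset.mem_range] at h₁ h₂
  exact EDF_inj_aux hbn hM h₁ h₂ he

lemma shifted_mem_ElF_iff (hrn : (r+1) ∣ n) (hl : l ≤ r) (hbn : Nat.Coprime b n)
    (hjl : j % (r+1) = l) (s : ℕ) :
    ((j + s*b : ℕ) : ZMod n) ∈ ElF n r l ↔ (r+1) ∣ s := by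
  have hbr : Nat.Coprime b (r+1) := Nat.Coprime.coprime_dvd_right hrn hbn
  rw [mem_ElF hrn hl, ZMod.val_natCast, Nat.mod_mod_of_dvd _ hrn]
  constructor
  · intro h
    have hme : j ≡ j + s*b [MOD (r+1)] := by
      have : (j + s*b) % (r+1) = j % (r+1) := by omega
      exact this.symm
    have hdvd : (r+1) ∣ (j + s*b - j) := (Nat.modEq_iff_dvd' (Nat.le_add_right _ _)).mp hme
    rw [Nat.add_sub_cancel_left] at hdvd
    exact (Nat.Coprime.dvd_of_dvd_mul_right hbr.symm) hdvd
  · rintro ⟨t, rfl⟩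
    rw [mul_assoc, Nat.add_mul_mod_self_left]
    exact hjl

lemma inter_eq (hrn : (r+1) ∣ n) (hl : l ≤ r) (hbn : Nat.Coprime b n)
    (hjl : j % (r+1) = l) {μ : ℕ} (hμ1 : 1 ≤ μ) (hμn : μ ≤ n/(r+1))
    (hMdef : M = n - μ*(r+1) + 1) :
    ElF n r l ∩ EDF n j b M =
      (Finset.range (n/(r+1) - μ + 1)).image (fun t => ((j + (t*(r+1))*b : ℕ) : ZMod n)) := by
  have hc : (n/(r+1)) * (r+1) = n := Nat.div_mul_cancel hrn
  have hsub : (n/(r+1) - μ)*(r+1) = (n/(r+1))*(r+1) - μ*(r+1) := Nat.sub_mul _ _ _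
  have hle : μ*(r+1) ≤ (n/(r+1))*(r+1) := Nat.mul_le_mul_right _ hμn
  have hMeq : M = (n/(r+1) - μ)*(r+1) + 1 := by omega
  apply Finset.ext
  intro x
  simp only [Finset.mem_inter, EDF, Finset.mem_image, Finset.mem_range]
  constructor
  · rintro ⟨hxl, s, hs, rfl⟩
    obtain ⟨t, rfl⟩ := (shifted_mem_ElF_iff hrn hl hbn hjl s).mp hxl
    have h1 : (r+1)*t ≤ (n/(r+1) - μ)*(r+1) := by omega
    have h2 : t*(r+1) ≤ (n/(r+1) - μ)*(r+1) := by rw [mul_comm]; exact h1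
    have h3 : t ≤ n/(r+1) - μ := Nat.le_of_mul_le_mul_right h2 (by omega)
    exact ⟨t, by omega, by rw [mul_comm t (r+1)]⟩
  · rintro ⟨t, ht, rfl⟩
    have h2 : t*(r+1) ≤ (n/(r+1) - μ)*(r+1) := Nat.mul_le_mul_right _ (by omega)
    have hs : t*(r+1) < M := by omega
    refine ⟨?_, t*(r+1), hs, rfl⟩
    have := (shifted_mem_ElF_iff hrn hl hbn hjl ((r+1)*t)).mpr ⟨t, rfl⟩
    rwa [mul_comm (r+1) t] at this

lemma card_inter (hrn : (r+1) ∣ n) (hl : l ≤ r) (hbn : Nat.Coprime b n)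
    (hjl : j % (r+1) = l) {μ : ℕ} (hμ1 : 1 ≤ μ) (hμn : μ ≤ n/(r+1))
    (hMdef : M = n - μ*(r+1) + 1) :
    (ElF n r l ∩ EDF n j b M).card = n/(r+1) - μ + 1 := by
  have hc : (n/(r+1)) * (r+1) = n := Nat.div_mul_cancel hrn
  have hsub : (n/(r+1) - μ)*(r+1) = (n/(r+1))*(r+1) - μ*(r+1) := Nat.sub_mul _ _ _
  have hle : μ*(r+1) ≤ (n/(r+1))*(r+1) := Nat.mul_le_mul_right _ hμn
  have hμA : 1 ≤ μ*(r+1) := Nat.one_le_iff_ne_zero.mpr (by positivity)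
  have hMn : M ≤ n := by omega
  rw [inter_eq hrn hl hbn hjl hμ1 hμn hMdef, Finset.card_image_of_injOn, Finset.card_range]
  intro t₁ h₁ t₂ h₂ he
  rw [Finset.mem_coe, Finset.mem_range] at h₁ h₂
  have hb1 : t₁*(r+1) < M := by
    have : t₁ * (r+1) ≤ (n/(r+1) - μ)*(r+1) := Nat.mul_le_mul_right _ (by omega)
    omega
  have hb2 : t₂*(r+1) < M := by
    have : t₂ * (r+1) ≤ (n/(r+1) - μ)*(r+1) := Nat.mul_le_mul_right _ (by omega)
    omega
  have he' : ((j + (t₁*(r+1))*b : ℕ) : ZMod n) = ((j + (t₂*(r+1))*b : ℕ) : ZMod n) := he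
  have := EDF_inj_aux (j := j) hbn hMn hb1 hb2 he'
  exact Nat.eq_of_mul_eq_mul_right (by omega : 0 < r+1) this

lemma card_union {k μ : ℕ} (hrn : (r+1) ∣ n) (hl : l ≤ r) (hbn : Nat.Coprime b n)
    (hjl : j % (r+1) = l) (hμ1 : 1 ≤ μ) (hμA : μ * (r+1) ≤ n) (hk : k = μ * r)
    (hMdef : M = n - μ*(r+1) + 1) :
    (ElF n r l ∪ EDF n j b M).card = n - k := by
  have hc : (n/(r+1)) * (r+1) = n := Nat.div_mul_cancel hrn
  have hμn : μ ≤ n/(r+1) := by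
    rw [Nat.le_div_iff_mul_le (by omega : 0 < r+1)]
    exact hμA
  have hA1 : 1 ≤ μ*(r+1) := Nat.one_le_iff_ne_zero.mpr (by positivity)
  have hA : μ * (r+1) = μ * r + μ := by ring
  have hMn : M ≤ n := by omega
  have h1 := Finset.card_union_add_card_inter (ElF n r l) (EDF n j b M)
  rw [card_ElF hrn hl, card_EDF hbn hMn, card_inter hrn hl hbn hjl hμ1 hμn hMdef] at h1
  omega



variable {F : Type*} [Field F] {n : ℕ} [NeZero n] {α : F}

lemma mem_codeOfZeros_iff {Z : Set F} {c : Fin n → F} :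
    c ∈ codeOfZeros n Z ↔ ∀ β ∈ Z, ∑ i : Fin n, c i * β ^ (i : ℕ) = 0 := Iff.rfl

lemma isCyclic_codeOfZeros_of {Z : Set F} (hZ : ∀ β ∈ Z, β ^ n = 1) :
    IsCyclicCode (codeOfZeros n Z) := by
  intro c hc β hβ
  have h1 := hc β hβ
  have hb := hZ β hβ
  have hmod : ∀ a : ℕ, β ^ (a % n) = β ^ a := by
    intro a
    conv_rhs => rw [← Nat.div_add_mod a n]
    rw [pow_add, pow_mul, hb, one_pow, one_mul]
  show ∑ i : Fin n, c (i - 1) * β ^ (i:ℕ) = 0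
  have hre : ∑ i : Fin n, c (i - 1) * β ^ (i:ℕ) = ∑ i : Fin n, β * (c i * β ^ (i:ℕ)) := by
    refine (Fintype.sum_equiv (Equiv.addRight (1 : Fin n))
      (fun i => β * (c i * β ^ (i:ℕ))) (fun i => c (i - 1) * β ^ (i:ℕ)) ?_).symm
    intro x
    have h2 : (Equiv.addRight (1 : Fin n)) x - 1 = x := by
      simp [Equiv.addRight]
    rw [h2]
    have h3 : ((Equiv.addRight (1 : Fin n)) x : ℕ) = (x.val + 1) % n := by
      show ((x + 1 : Fin n) : ℕ) = (x.val + 1) % n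
      rw [Fin.val_add, Fin.val_one']
      have h4 : (x.val + 1 % n) % n = (x.val % n + 1 % n % n) % n := Nat.add_mod _ _ _
      have h5 : (x.val + 1) % n = (x.val % n + 1 % n) % n := Nat.add_mod _ _ _
      rw [h4, h5, Nat.mod_mod_of_dvd 1 (dvd_refl n)]
    rw [h3, hmod, pow_succ]
    ring
  rw [hre, ← Finset.mul_sum, h1, mul_zero]



noncomputable def evMap (α : F) (n : ℕ) [NeZero n] (EF : Finset (ZMod n)) :
    (Fin n → F) →ₗ[F] (EF → F) where
  toFun := fun c e => ∑ i : Fin n, c i * ap α ((e : ZMod n) * ((i:ℕ) : ZMod n))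
  map_add' := by
    intro a b
    funext e
    simp [add_mul, Finset.sum_add_distrib]
  map_smul' := by
    intro t a
    funext e
    simp [Finset.mul_sum, mul_assoc]

lemma mem_code_ap_iff (hα : IsPrimitiveRoot α n) (EF : Finset (ZMod n)) (c : Fin n → F) :
    c ∈ codeOfZeros n (ap α '' (EF : Set (ZMod n))) ↔
      ∀ e ∈ EF, ∑ i : Fin n, c i * ap α (e * ((i:ℕ) : ZMod n)) = 0 := by
  have hcong : ∀ e : ZMod n, ∑ i : Fin n, c i * ap α (e * ((i:ℕ):ZMod n))
      = ∑ i : Fin n, c i * (ap α e) ^ (i:ℕ) :=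
    fun e => Finset.sum_congr rfl (fun i _ => by rw [ap_mul_natCast hα])
  constructor
  · intro h e he
    rw [hcong]
    exact h _ ⟨e, Finset.mem_coe.mpr he, rfl⟩
  · rintro h β ⟨e, he, rfl⟩
    rw [← hcong]
    exact h e (Finset.mem_coe.mp he)

lemma ker_evMap (hα : IsPrimitiveRoot α n) (EF : Finset (ZMod n)) :
    LinearMap.ker (evMap α n EF) = codeOfZeros n (ap α '' (EF : Set (ZMod n))) := by
  ext c
  rw [LinearMap.mem_ker, mem_code_ap_iff hα]
  constructor
  · intro h e he
    have := congrFun h (⟨e, he⟩ : ↥EF)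
    simpa [evMap] using this
  · intro h
    funext e
    simpa [evMap] using h e e.2

lemma surj_evMap (hα : IsPrimitiveRoot α n) (hnF : (n : F) ≠ 0) (EF : Finset (ZMod n)) :
    Function.Surjective (evMap α n EF) := by
  classical
  intro u
  refine ⟨fun i => (n : F)⁻¹ * ∑ e : ↥EF, u e * ap α (-((e : ZMod n) * ((i:ℕ):ZMod n))), ?_⟩
  funext e₀
  show ∑ i : Fin n, ((n:F)⁻¹ * ∑ e : ↥EF, u e * ap α (-((e:ZMod n) * ((i:ℕ):ZMod n))))
      * ap α ((e₀:ZMod n) * ((i:ℕ):ZMod n)) = u e₀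
  have step1 : ∀ i : Fin n,
      ((n:F)⁻¹ * ∑ e : ↥EF, u e * ap α (-((e:ZMod n) * ((i:ℕ):ZMod n))))
        * ap α ((e₀:ZMod n) * ((i:ℕ):ZMod n))
      = (n:F)⁻¹ * ∑ e : ↥EF, u e * ap α (((e₀:ZMod n) - (e:ZMod n)) * ((i:ℕ):ZMod n)) := by
    intro i
    rw [mul_assoc, Finset.sum_mul]
    congr 1
    apply Finset.sum_congr rfl
    intro e _
    rw [mul_assoc]
    congr 1
    rw [← ap_add hα]
    congr 1
    ring
  simp only [step1]
  rw [← Finset.mul_sum, Finset.sum_comm]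
  have step2 : ∀ e : ↥EF, ∑ i : Fin n, u e * ap α (((e₀:ZMod n) - (e:ZMod n)) * ((i:ℕ):ZMod n))
      = u e * (if ((e₀:ZMod n) - (e:ZMod n)) = 0 then (n:F) else 0) := by
    intro e
    rw [← Finset.mul_sum, sum_ap hα]
  simp only [step2]
  rw [Finset.sum_eq_single_of_mem e₀ (Finset.mem_univ _)]
  · rw [sub_self, if_pos rfl]
    field_simp
  · intro e _ hne
    rw [if_neg, mul_zero]
    intro hcontra
    exact hne (Subtype.ext (by rwa [sub_eq_zero, eq_comm] at hcontra))

lemma finrank_codeOfZeros (hα : IsPrimitiveRoot α n) (hnF : (n : F) ≠ 0)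
    (EF : Finset (ZMod n)) :
    Module.finrank F (codeOfZeros n (ap α '' (EF : Set (ZMod n)))) = n - EF.card := by
  have h1 := LinearMap.finrank_range_add_finrank_ker (evMap α n EF)
  rw [LinearMap.range_eq_top.mpr (surj_evMap hα hnF EF), finrank_top, ker_evMap hα] at h1
  rw [Module.finrank_fintype_fun_eq_card, Fintype.card_coe,
    Module.finrank_fintype_fun_eq_card, Fintype.card_fin] at h1
  omega


lemma L_eq {r l : ℕ} (hα : IsPrimitiveRoot α n) (hrn : (r+1) ∣ n) (hl : l ≤ r) :
    {β : F | ∃ i : ℕ, i % (r + 1) = l ∧ β = α ^ i}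
      = ap α '' ((ElF n r l : Finset (ZMod n)) : Set (ZMod n)) := by
  ext β
  simp only [Set.mem_setOf_eq, Set.mem_image, Finset.mem_coe]
  constructor
  · rintro ⟨i, hi, rfl⟩
    refine ⟨((i:ℕ) : ZMod n), ?_, (ap_natCast hα i)⟩
    rw [mem_ElF hrn hl, ZMod.val_natCast, Nat.mod_mod_of_dvd _ hrn, hi]
  · rintro ⟨x, hx, rfl⟩
    rw [mem_ElF hrn hl] at hx
    exact ⟨x.val, hx, rfl⟩

lemma D_eq {r j b μ M : ℕ} (hα : IsPrimitiveRoot α n)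
    (hMdef : M = n - μ*(r+1) + 1) :
    {β : F | ∃ s : ℕ, s ≤ n - μ * (r + 1) ∧ β = α ^ (j + s * b)}
      = ap α '' ((EDF n j b M : Finset (ZMod n)) : Set (ZMod n)) := by
  ext β
  simp only [Set.mem_setOf_eq, Set.mem_image, Finset.mem_coe, EDF, Finset.mem_image,
    Finset.mem_range]
  constructor
  · rintro ⟨s, hs, rfl⟩
    exact ⟨((j + s*b : ℕ) : ZMod n), ⟨s, by omega, rfl⟩, ap_natCast hα (j + s*b)⟩
  · rintro ⟨x, ⟨s, hs, rfl⟩, rfl⟩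
    exact ⟨s, by omega, ap_natCast hα (j + s*b)⟩

lemma j_mod (hα : IsPrimitiveRoot α n) {r l j : ℕ} (hrn : (r+1) ∣ n) (hl : l ≤ r)
    {L : Set F} (hL : L = {β | ∃ i : ℕ, i % (r + 1) = l ∧ β = α ^ i})
    (hj : α ^ j ∈ L) : j % (r+1) = l := by
  rw [hL] at hj
  obtain ⟨i, hi, hji⟩ := hj
  have npos : 0 < n := Nat.pos_of_ne_zero (NeZero.ne n)
  have h1 : α ^ (j % n) = α ^ (i % n) := by rw [pow_mod hα, pow_mod hα, hji]
  have h2 : j % n = i % n := hα.pow_inj (Nat.mod_lt _ npos) (Nat.mod_lt _ npos) h1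
  have h3 : j % (r+1) = i % (r+1) := by
    have h4 : j % n % (r+1) = j % (r+1) := Nat.mod_mod_of_dvd _ hrn
    have h5 : i % n % (r+1) = i % (r+1) := Nat.mod_mod_of_dvd _ hrn
    rw [h2] at h4
    omega
  omega

lemma locality_recover {r l : ℕ} (hα : IsPrimitiveRoot α n) (hnF : (n:F) ≠ 0)
    (hrn : (r+1) ∣ n) (hl : l ≤ r) (Z2 : Set F) (i₀ : Fin n) :
    ∃ A : Finset (Fin n), A.card ≤ r ∧ i₀ ∉ A ∧
      ∃ φ : ((j : A) → F) → F,
        ∀ c ∈ codeOfZeros n ((ap α '' ((ElF n r l : Finset (ZMod n)) : Set (ZMod n))) ∪ Z2),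
          c i₀ = φ (fun j => c j) := by
  classical
  have npos : 0 < n := Nat.pos_of_ne_zero (NeZero.ne n)
  set n' := n / (r+1) with hn'def
  have hn' : n' * (r+1) = n := Nat.div_mul_cancel hrn
  have hn'pos : 0 < n' := by
    rcases Nat.eq_zero_or_pos n' with h0 | h; · rw [h0, zero_mul] at hn'; omega
    exact h
  have hn'F : ((n' : ℕ) : F) ≠ 0 := by
    intro h
    apply hnF
    have : ((n' * (r+1) : ℕ) : F) = (n : F) := by rw [hn']
    rw [Nat.cast_mul, h, zero_mul] at this
    exact this.symm
  have hvlt : ∀ t : ℕ, t < r + 1 → t*n' < n := by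
    intro t ht
    have h1 : t*n' ≤ r*n' + 0 := by
      have := Nat.mul_le_mul_right n' (by omega : t ≤ r); omega
    have h3 : (r+1)*n' = n := by rw [mul_comm]; exact hn'
    have h4 : (r+1)*n' = r*n' + n' := by ring
    omega
  set A : Finset (Fin n) := (Finset.range r).image
      (fun t => (⟨(i₀.val + (t+1)*n') % n, Nat.mod_lt _ npos⟩ : Fin n)) with hAdef
  have hAcard : A.card = r := by
    rw [hAdef, Finset.card_image_of_injOn, Finset.card_range]
    intro t₁ h₁ t₂ h₂ he
    rw [Finset.mem_coe, Finset.mem_range] at h₁ h₂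
    have hv : (i₀.val + (t₁+1)*n') % n = (i₀.val + (t₂+1)*n') % n := congrArg Fin.val he
    have hmq : (i₀.val + (t₁+1)*n') ≡ (i₀.val + (t₂+1)*n') [MOD n] := hv
    have h4 : ((t₁+1)*n') % n = ((t₂+1)*n') % n := Nat.ModEq.add_left_cancel' i₀.val hmq
    rw [Nat.mod_eq_of_lt (hvlt _ (by omega)), Nat.mod_eq_of_lt (hvlt _ (by omega))] at h4
    have := Nat.eq_of_mul_eq_mul_right hn'pos h4
    omega
  have hi₀A : i₀ ∉ A := by
    rw [hAdef]
    intro hmem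
    obtain ⟨t, ht, hfe⟩ := Finset.mem_image.mp hmem
    rw [Finset.mem_range] at ht
    have hv : (i₀.val + (t+1)*n') % n = i₀.val := congrArg Fin.val hfe
    have hmq : i₀.val + (t+1)*n' ≡ i₀.val + 0 [MOD n] := by
      show (i₀.val + (t+1)*n') % n = (i₀.val + 0) % n
      rw [hv, Nat.add_zero, Nat.mod_eq_of_lt i₀.isLt]
    have h4 : ((t+1)*n') % n = 0 % n := Nat.ModEq.add_left_cancel' i₀.val hmq
    rw [Nat.zero_mod, Nat.mod_eq_of_lt (hvlt _ (by omega))] at h4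
    have : 0 < (t+1)*n' := Nat.mul_pos (by omega) hn'pos
    omega
  set δ : Fin n → ZMod n := fun x => ((x.val : ℕ) : ZMod n) - ((i₀.val : ℕ) : ZMod n) with hδ
  refine ⟨A, le_of_eq hAcard, hi₀A,
    fun v => -∑ jj ∈ A.attach, ap α ((l:ZMod n) * δ jj.1) * v jj, ?_⟩
  intro c hc
  have hz : ∀ e ∈ ElF n r l, ∑ i : Fin n, c i * ap α (e * ((i:ℕ):ZMod n)) = 0 := by
    intro e he
    have hsub : c ∈ codeOfZeros n (ap α '' ((ElF n r l : Finset (ZMod n)) : Set (ZMod n))) :=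
      fun β hβ => hc β (Set.mem_union_left _ hβ)
    exact (mem_code_ap_iff hα _ c).mp hsub e he
  -- the fundamental vanishing sum
  have key : ∑ i : Fin n,
      c i * (∑ t ∈ Finset.range n', ap α (((l + t*(r+1) : ℕ) : ZMod n) * δ i)) = 0 := by
    have h0 : ∑ t ∈ Finset.range n',
        ap α (-(((l + t*(r+1) : ℕ) : ZMod n) * ((i₀.val:ℕ):ZMod n))) *
        (∑ i : Fin n, c i * ap α (((l + t*(r+1) : ℕ) : ZMod n) * ((i:ℕ):ZMod n))) = 0 := by
      apply Finset.sum_eq_zero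
      intro t ht
      rw [hz _ (Finset.mem_image.mpr ⟨t, ht, rfl⟩), mul_zero]
    have h1 : ∀ t ∈ Finset.range n',
        ap α (-(((l + t*(r+1) : ℕ) : ZMod n) * ((i₀.val:ℕ):ZMod n))) *
        (∑ i : Fin n, c i * ap α (((l + t*(r+1) : ℕ) : ZMod n) * ((i:ℕ):ZMod n)))
        = ∑ i : Fin n, c i * ap α (((l + t*(r+1) : ℕ) : ZMod n) * δ i) := by
      intro t _
      rw [Finset.mul_sum]
      apply Finset.sum_congr rfl
      intro i _
      have hsplit : ap α (((l + t*(r+1) : ℕ) : ZMod n) * δ i)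
          = ap α (((l + t*(r+1) : ℕ) : ZMod n) * ((i:ℕ):ZMod n)) *
            ap α (-(((l + t*(r+1) : ℕ) : ZMod n) * ((i₀.val:ℕ):ZMod n))) := by
        rw [← ap_add hα]
        congr 1
        rw [hδ]
        ring
      rw [hsplit]
      ring
    rw [Finset.sum_congr rfl h1, Finset.sum_comm] at h0
    rw [← h0]
    apply Finset.sum_congr rfl
    intro i _
    rw [Finset.mul_sum]
  -- compute the inner geometric sums
  have hW : ∀ i : Fin n,
      (∑ t ∈ Finset.range n', ap α (((l + t*(r+1) : ℕ) : ZMod n) * δ i))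
      = if n' ∣ (δ i).val then ap α ((l : ZMod n) * δ i) * (n' : F) else 0 := by
    intro i
    have hterm : ∀ t : ℕ, ap α (((l + t*(r+1) : ℕ) : ZMod n) * δ i)
        = ap α ((l:ZMod n) * δ i) * (ap α ((((r+1) : ℕ):ZMod n) * δ i)) ^ t := by
      intro t
      rw [← ap_mul_natCast hα, ← ap_add hα]
      congr 1
      push_cast
      ring
    set γ := ap α ((((r+1):ℕ):ZMod n) * δ i) with hγ
    have hγn : γ ^ n' = 1 := by
      rw [hγ, ← ap_mul_natCast hα]
      have hc2 : ((((r+1):ℕ):ZMod n) * δ i) * ((n':ℕ) : ZMod n) = 0 := by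
        have hcast : (((r+1):ℕ):ZMod n) * ((n':ℕ):ZMod n) = ((n:ℕ) : ZMod n) := by
          rw [← Nat.cast_mul]
          congr 1
          rw [mul_comm]
          exact hn'
        calc ((((r+1):ℕ):ZMod n) * δ i) * ((n':ℕ) : ZMod n)
            = ((((r+1):ℕ):ZMod n) * ((n':ℕ):ZMod n)) * δ i := by ring
          _ = ((n:ℕ):ZMod n) * δ i := by rw [hcast]
          _ = 0 := by rw [ZMod.natCast_self, zero_mul]
      rw [hc2, ap_zero]
    have hdvd_iff : γ = 1 ↔ n' ∣ (δ i).val := by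
      rw [hγ, ap_eq_one hα]
      have hrw : (((r+1):ℕ):ZMod n) * δ i = (((r+1) * (δ i).val : ℕ) : ZMod n) := by
        rw [Nat.cast_mul, ZMod.natCast_rightInverse (δ i)]
      rw [hrw, ZMod.natCast_eq_zero_iff]
      have h6 : (r+1)*n' = n := by rw [mul_comm]; exact hn'
      constructor
      · intro h
        have h7 : (r+1)*n' ∣ (r+1)*(δ i).val := by rw [h6]; exact h
        exact (mul_dvd_mul_iff_left (by omega : (r+1:ℕ) ≠ 0)).mp h7
      · intro h
        have h7 : (r+1)*n' ∣ (r+1)*(δ i).val := mul_dvd_mul_left (r+1) h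
        rw [h6] at h7
        exact h7
    simp only [hterm]
    rw [← Finset.mul_sum]
    by_cases hcase : n' ∣ (δ i).val
    · rw [if_pos hcase]
      have hone : γ = 1 := hdvd_iff.mpr hcase
      rw [hone]
      simp
    · rw [if_neg hcase]
      have hγ1 : γ ≠ 1 := fun h => hcase (hdvd_iff.mp h)
      rw [geom_sum_eq hγ1, hγn]
      simp
  -- identify the support of the weights
  have hδA : ∀ t : ℕ, t < r →
      δ (⟨(i₀.val + (t+1)*n') % n, Nat.mod_lt _ npos⟩ : Fin n) = (((t+1)*n' : ℕ) : ZMod n) := by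
    intro t ht
    rw [hδ]
    show (((i₀.val + (t+1)*n') % n : ℕ) : ZMod n) - ((i₀.val : ℕ) : ZMod n) = (((t+1)*n' : ℕ) : ZMod n)
    rw [ZMod.natCast_mod, Nat.cast_add]
    ring
  have hfilter : Finset.univ.filter (fun i : Fin n => n' ∣ (δ i).val) = insert i₀ A := by
    apply Finset.ext
    intro x
    simp only [Finset.mem_filter, Finset.mem_univ, true_and, Finset.mem_insert]
    constructor
    · intro hx
      obtain ⟨u, hu⟩ := hx
      have hval : (δ x).val < n := ZMod.val_lt _
      have huler : u ≤ r := by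
        by_contra hcon
        push_neg at hcon
        have h5 : (r+1)*n' ≤ u*n' := Nat.mul_le_mul_right _ (by omega)
        have h6 : (r+1)*n' = n := by rw [mul_comm]; exact hn'
        have h7 : n' * u = u * n' := mul_comm _ _
        omega
      have hxcast : ((x.val : ℕ) : ZMod n) = ((i₀.val + n' * u : ℕ) : ZMod n) := by
        have h8 : δ x = (((δ x).val : ℕ) : ZMod n) := (ZMod.natCast_rightInverse (δ x)).symm
        have h9 : ((x.val : ℕ) : ZMod n) = δ x + ((i₀.val : ℕ) : ZMod n) := by rw [hδ]; ring
        rw [h9, h8, hu]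
        push_cast
        ring
      have h10 : x.val % n = (i₀.val + n' * u) % n := (ZMod.natCast_eq_natCast_iff _ _ _).mp hxcast
      rw [Nat.mod_eq_of_lt x.isLt] at h10
      rcases Nat.eq_zero_or_pos u with h0 | hpos
      · left
        apply Fin.ext
        rw [h10, h0, Nat.mul_zero, Nat.add_zero, Nat.mod_eq_of_lt i₀.isLt]
      · right
        rw [hAdef]
        refine Finset.mem_image.mpr ⟨u - 1, Finset.mem_range.mpr (by omega), ?_⟩
        apply Fin.ext
        show (i₀.val + (u - 1 + 1)*n') % n = x.val
        have : u - 1 + 1 = u := by omega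
        rw [this, h10, mul_comm]
    · intro hx
      rcases hx with rfl | hxA
      · refine ⟨0, ?_⟩
        have : δ x = 0 := by rw [hδ]; ring
        rw [this, ZMod.val_zero, Nat.mul_zero]
      · rw [hAdef] at hxA
        obtain ⟨t, ht, rfl⟩ := Finset.mem_image.mp hxA
        rw [Finset.mem_range] at ht
        rw [hδA t ht, ZMod.val_natCast, Nat.mod_eq_of_lt (hvlt _ (by omega))]
        exact ⟨t+1, by ring⟩
  -- conclude
  simp only [hW] at key
  rw [← Finset.sum_filter_add_sum_filter_not Finset.univ (fun i : Fin n => n' ∣ (δ i).val)] at key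
  have hz2 : ∑ i ∈ Finset.univ.filter (fun i : Fin n => ¬ n' ∣ (δ i).val),
      c i * (if n' ∣ (δ i).val then ap α ((l : ZMod n) * δ i) * (n' : F) else 0) = 0 := by
    apply Finset.sum_eq_zero
    intro i hi
    rw [Finset.mem_filter] at hi
    rw [if_neg hi.2, mul_zero]
  rw [hz2, add_zero, hfilter, Finset.sum_insert hi₀A] at key
  have hδi₀ : δ i₀ = 0 := by rw [hδ]; ring
  have hterm0 : c i₀ * (if n' ∣ (δ i₀).val then ap α ((l : ZMod n) * δ i₀) * (n' : F) else 0)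
      = c i₀ * (n' : F) := by
    rw [hδi₀]
    rw [if_pos (by rw [ZMod.val_zero]; exact ⟨0, by ring⟩)]
    rw [mul_zero, ap_zero, one_mul]
  rw [hterm0] at key
  have hsimpA : ∑ i ∈ A, c i * (if n' ∣ (δ i).val then ap α ((l : ZMod n) * δ i) * (n' : F) else 0)
      = (∑ i ∈ A, ap α ((l : ZMod n) * δ i) * c i) * (n' : F) := by
    rw [Finset.sum_mul]
    apply Finset.sum_congr rfl
    intro i hi
    have hidvd : n' ∣ (δ i).val := by
      have : i ∈ Finset.univ.filter (fun i : Fin n => n' ∣ (δ i).val) := by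
        rw [hfilter]; exact Finset.mem_insert_of_mem hi
      exact (Finset.mem_filter.mp this).2
    rw [if_pos hidvd]
    ring
  rw [hsimpA] at key
  have hfact : (c i₀ + ∑ i ∈ A, ap α ((l : ZMod n) * δ i) * c i) * (n' : F) = 0 := by
    rw [add_mul, key]
  have hinner : c i₀ + ∑ i ∈ A, ap α ((l : ZMod n) * δ i) * c i = 0 :=
    by
      rcases mul_eq_zero.mp hfact with h | h
      · exact h
      · exact absurd h hn'F
  have hattach : ∑ jj ∈ A.attach, ap α ((l:ZMod n) * δ jj.1) * c jj.1
      = ∑ i ∈ A, ap α ((l : ZMod n) * δ i) * c i := Finset.sum_attach A (fun i => ap α ((l:ZMod n) * δ i) * c i)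
  rw [← hattach] at hinner
  show c i₀ = -∑ jj ∈ A.attach, ap α ((l:ZMod n) * δ jj.1) * c jj.1
  linear_combination hinner


lemma bch_bound {j b M : ℕ} (hα : IsPrimitiveRoot α n) (hbn : Nat.Coprime b n)
    (hM : M ≤ n) (c : Fin n → F)
    (hcz : ∀ e ∈ EDF n j b M, ∑ i : Fin n, c i * ap α (e * ((i:ℕ):ZMod n)) = 0)
    (hcne : c ≠ 0) :
    M + 1 ≤ Nat.card {i : Fin n // c i ≠ 0} := by
  classical
  rw [Nat.card_eq_fintype_card, Fintype.card_subtype]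
  by_contra hcon
  push_neg at hcon
  set S := Finset.univ.filter (fun i : Fin n => c i ≠ 0) with hS
  set w := S.card with hw
  have hwM : w ≤ M := by omega
  obtain ⟨i₀, hi₀⟩ := Function.ne_iff.mp hcne
  rw [Pi.zero_apply] at hi₀
  have hi₀S : i₀ ∈ S := by rw [hS]; simp [hi₀]
  let g : ↥S ≃ Fin w := Fintype.equivFinOfCardEq (Fintype.card_coe S)
  let idx : Fin w → Fin n := fun t => (g.symm t : Fin n)
  have hidx_inj : Function.Injective idx := by
    intro t₁ t₂ h
    have h0 : g.symm t₁ = g.symm t₂ := Subtype.ext h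
    exact g.symm.injective h0
  let x : Fin w → F := fun t => ap α (((b:ℕ):ZMod n) * (((idx t : Fin n):ℕ):ZMod n))
  have hxinj : Function.Injective x := by
    intro t₁ t₂ h
    have h1 := ap_inj hα h
    have hbu : IsUnit (((b:ℕ):ZMod n)) := by
      rw [← ZMod.coe_unitOfCoprime b hbn]
      exact Units.isUnit _
    have h2 : ((((idx t₁ : Fin n):ℕ):ZMod n)) = ((((idx t₂ : Fin n):ℕ):ZMod n)) :=
      hbu.mul_right_injective h1
    have h3 : ((idx t₁ : Fin n):ℕ) % n = ((idx t₂ : Fin n):ℕ) % n :=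
      (ZMod.natCast_eq_natCast_iff _ _ _).mp h2
    rw [Nat.mod_eq_of_lt (idx t₁).isLt, Nat.mod_eq_of_lt (idx t₂).isLt] at h3
    exact hidx_inj (Fin.ext h3)
  let dco : Fin w → F := fun t => ap α (((j:ℕ):ZMod n) * (((idx t : Fin n):ℕ):ZMod n))
  let Amat : Matrix (Fin w) (Fin w) F :=
    Matrix.of fun s t => dco t * (Matrix.transpose (Matrix.vandermonde x)) s t
  have hdet : Amat.det ≠ 0 := by
    show (Matrix.of fun s t => dco t * (Matrix.transpose (Matrix.vandermonde x)) s t).det ≠ 0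
    rw [Matrix.det_mul_row dco (Matrix.transpose (Matrix.vandermonde x)), Matrix.det_transpose]
    apply mul_ne_zero
    · rw [Finset.prod_ne_zero_iff]
      exact fun t _ => ap_ne_zero hα _
    · exact Matrix.det_vandermonde_ne_zero_iff.mpr hxinj
  have hmv : Amat.mulVec (fun t => c (idx t)) = 0 := by
    funext s
    show ∑ t : Fin w, Amat s t * c (idx t) = 0
    have hterm : ∀ t : Fin w, Amat s t * c (idx t)
        = c (idx t) * ap α ((((j + (s:ℕ)*b : ℕ)):ZMod n) * (((idx t : Fin n):ℕ):ZMod n)) := by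
      intro t
      show dco t * (x t) ^ (s:ℕ) * c (idx t) = _
      have hsplit : ap α ((((j + (s:ℕ)*b : ℕ)):ZMod n) * (((idx t : Fin n):ℕ):ZMod n))
          = dco t * (x t) ^ (s:ℕ) := by
        show _ = ap α _ * (ap α _) ^ (s:ℕ)
        rw [← ap_mul_natCast hα, ← ap_add hα]
        congr 1
        push_cast
        ring
      rw [hsplit]
      ring
    rw [Finset.sum_congr rfl (fun t _ => hterm t)]
    have hzero := hcz ((j + (s:ℕ)*b : ℕ) : ZMod n)
      (Finset.mem_image.mpr ⟨(s:ℕ), Finset.mem_range.mpr (by omega), rfl⟩)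
    have hrestrict : ∑ i : Fin n, c i * ap α ((((j + (s:ℕ)*b : ℕ)):ZMod n) * ((i:ℕ):ZMod n))
        = ∑ ii ∈ S, c ii * ap α ((((j + (s:ℕ)*b : ℕ)):ZMod n) * ((ii:ℕ):ZMod n)) := by
      symm
      apply Finset.sum_subset (Finset.subset_univ S)
      intro i _ hiS
      have hci : c i = 0 := by
        by_contra hne
        exact hiS (by rw [hS]; simp [hne])
      rw [hci, zero_mul]
    have hreindex : ∑ ii ∈ S, c ii * ap α ((((j + (s:ℕ)*b : ℕ)):ZMod n) * ((ii:ℕ):ZMod n))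
        = ∑ t : Fin w, c (idx t) * ap α ((((j + (s:ℕ)*b : ℕ)):ZMod n) * (((idx t : Fin n):ℕ):ZMod n)) := by
      rw [← Finset.sum_attach S
        (fun ii => c ii * ap α ((((j + (s:ℕ)*b : ℕ)):ZMod n) * ((ii:ℕ):ZMod n)))]
      exact (Equiv.sum_comp g.symm
        (fun ii => c (ii : Fin n) *
          ap α ((((j + (s:ℕ)*b : ℕ)):ZMod n) * (((ii : Fin n):ℕ):ZMod n)))).symm
    rw [← hreindex, ← hrestrict]
    exact hzero
  have hv0 := Matrix.eq_zero_of_mulVec_eq_zero hdet hmv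
  have hc0 : c i₀ = 0 := by
    have h5 := congrFun hv0 (g ⟨i₀, hi₀S⟩)
    simpa [idx] using h5
  exact hi₀ hc0


lemma exists_low_weight {r l j b μ M : ℕ} (hα : IsPrimitiveRoot α n) (hnF : (n:F) ≠ 0)
    (hrn : (r+1) ∣ n) (hr : 0 < r) (hl : l ≤ r) (hbn : Nat.Coprime b n)
    (hjl : j % (r+1) = l) (hμ1 : 1 ≤ μ) (hμA : μ*(r+1) ≤ n)
    (hMdef : M = n - μ*(r+1) + 1) :
    ∃ c : Fin n → F, c ≠ 0 ∧
      (∀ e ∈ ElF n r l ∪ EDF n j b M, ∑ i : Fin n, c i * ap α (e * ((i:ℕ):ZMod n)) = 0) ∧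
      Nat.card {i : Fin n // c i ≠ 0} ≤ M + 1 := by
  classical
  have npos : 0 < n := Nat.pos_of_ne_zero (NeZero.ne n)
  set n' := n / (r+1) with hn'def
  have hn' : n' * (r+1) = n := Nat.div_mul_cancel hrn
  have hμn' : μ ≤ n' := by rw [hn'def, Nat.le_div_iff_mul_le (by omega : 0 < r+1)]; exact hμA
  have hsubμ : (μ-1)*(r+1) = μ*(r+1) - (r+1) := by rw [Nat.sub_mul, one_mul]
  have h1μ : (r+1) ≤ μ*(r+1) := by
    have := Nat.mul_le_mul_right (r+1) hμ1
    omega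
  set DegH := (μ-1)*(r+1) + (r-1) with hDegH
  have hMDeg : M + DegH = n - 1 := by omega
  have hDegn : DegH < n := by omega
  have hMr : ∃ v : ℕ, M = v*(r+1) + 1 := by
    obtain ⟨w2, hw2⟩ : (r+1) ∣ (n - μ*(r+1)) :=
      Nat.dvd_sub hrn (Dvd.intro μ (mul_comm (r+1) μ))
    refine ⟨w2, ?_⟩
    have hcomm : (r+1)*w2 = w2*(r+1) := mul_comm _ _
    omega
  -- the polynomial
  set Q : Polynomial F :=
    ∏ i ∈ Finset.range (μ-1), (Polynomial.X - Polynomial.C (ap α ((((i+1)*(r+1) : ℕ)) : ZMod n)))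
    with hQ
  set P : Polynomial F := Polynomial.expand F (r+1) Q with hP
  set qp : Polynomial F :=
    ∏ t ∈ Finset.range (r-1), (Polynomial.X - Polynomial.C (ap α ((((t+1)*n' : ℕ)) : ZMod n)))
    with hqp
  set hpoly : Polynomial F := qp * P with hhp
  have hQdeg : Q.natDegree ≤ μ-1 := by
    rw [hQ]
    refine le_trans (Polynomial.natDegree_prod_le _ _) ?_
    calc ∑ i ∈ Finset.range (μ-1),
        (Polynomial.X - Polynomial.C (ap α ((((i+1)*(r+1) : ℕ)) : ZMod n))).natDegree
        ≤ ∑ _i ∈ Finset.range (μ-1), 1 := by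
          apply Finset.sum_le_sum
          intro i _
          exact le_of_eq (Polynomial.natDegree_X_sub_C _)
      _ = μ-1 := by rw [Finset.sum_const, Finset.card_range, smul_eq_mul, mul_one]
  have hqpdeg : qp.natDegree ≤ r-1 := by
    rw [hqp]
    refine le_trans (Polynomial.natDegree_prod_le _ _) ?_
    calc ∑ t ∈ Finset.range (r-1),
        (Polynomial.X - Polynomial.C (ap α ((((t+1)*n' : ℕ)) : ZMod n))).natDegree
        ≤ ∑ _t ∈ Finset.range (r-1), 1 := by
          apply Finset.sum_le_sum
          intro t _
          exact le_of_eq (Polynomial.natDegree_X_sub_C _)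
      _ = r-1 := by rw [Finset.sum_const, Finset.card_range, smul_eq_mul, mul_one]
  have hPdeg : P.natDegree ≤ (μ-1)*(r+1) := by
    rw [hP, Polynomial.natDegree_expand]
    exact Nat.mul_le_mul_right _ hQdeg
  have hdeg : hpoly.natDegree ≤ DegH := by
    refine le_trans Polynomial.natDegree_mul_le ?_
    omega
  have hQne : Q ≠ 0 := by
    apply Finset.prod_ne_zero_iff.mpr
    intro i _
    exact Polynomial.X_sub_C_ne_zero _
  have hqpne : qp ≠ 0 := by
    apply Finset.prod_ne_zero_iff.mpr
    intro i _
    exact Polynomial.X_sub_C_ne_zero _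
  have hPne : P ≠ 0 := fun h => hQne ((Polynomial.expand_eq_zero (by omega : 0 < r+1)).mp h)
  have hpne : hpoly ≠ 0 := mul_ne_zero hqpne hPne
  -- support condition
  have hsupp : ∀ u : ℕ, u % (r+1) = r → hpoly.coeff u = 0 := by
    intro u hu
    rw [hhp, Polynomial.coeff_mul]
    apply Finset.sum_eq_zero
    intro x hx
    rw [Finset.HasAntidiagonal.mem_antidiagonal] at hx
    by_cases hdvd : (r+1) ∣ x.2
    · -- then x.1 ≡ r mod (r+1), so x.1 ≥ r > r-1 ≥ natDegree qp
      have hx1 : x.1 % (r+1) = r := by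
        obtain ⟨w2, hw2⟩ := hdvd
        have hcomm : (r+1)*w2 = w2*(r+1) := mul_comm _ _
        have h9 : u = x.1 + w2*(r+1) := by omega
        have h10 : u % (r+1) = (x.1 + w2*(r+1)) % (r+1) := by rw [h9]
        rw [Nat.add_mul_mod_self_right] at h10
        omega
      have hx1ge : r ≤ x.1 := by
        have := Nat.mod_le x.1 (r+1)
        omega
      have : qp.coeff x.1 = 0 :=
        Polynomial.coeff_eq_zero_of_natDegree_lt (by omega)
      rw [this, zero_mul]
    · have : P.coeff x.2 = 0 := by
        rw [hP, Polynomial.coeff_expand (by omega : 0 < r+1), if_neg hdvd]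
      rw [this, mul_zero]
  -- vanishing at planted points
  have hrootR1 : ∀ a t : ℕ, a < μ-1 → t < r+1 →
      hpoly.eval (α ^ ((a+1) + t*n')) = 0 := by
    intro a t ha ht
    rw [hhp, Polynomial.eval_mul]
    have hPz : P.eval (α ^ ((a+1) + t*n')) = 0 := by
      rw [hP, Polynomial.expand_eval]
      have hpow : (α ^ ((a+1) + t*n')) ^ (r+1) = ap α ((((a+1)*(r+1) : ℕ)) : ZMod n) := by
        rw [ap_natCast hα, ← pow_mul]
        have : ((a+1) + t*n')*(r+1) = (a+1)*(r+1) + t*n := by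
          calc ((a+1) + t*n')*(r+1) = (a+1)*(r+1) + t*(n'*(r+1)) := by ring
            _ = (a+1)*(r+1) + t*n := by rw [hn']
        rw [this, pow_add]
        have hz1 : α ^ (t*n) = 1 := by
          rw [mul_comm, pow_mul, hα.pow_eq_one, one_pow]
        rw [hz1, mul_one]
      rw [hQ]
      rw [Polynomial.eval_prod]
      apply Finset.prod_eq_zero (Finset.mem_range.mpr ha)
      rw [Polynomial.eval_sub, Polynomial.eval_X, Polynomial.eval_C, hpow, sub_self]
    rw [hPz, mul_zero]
  have hrootR2 : ∀ t : ℕ, t < r-1 → hpoly.eval (α ^ ((t+1)*n')) = 0 := by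
    intro t ht
    rw [hhp, Polynomial.eval_mul]
    have hqz : qp.eval (α ^ ((t+1)*n')) = 0 := by
      rw [hqp, Polynomial.eval_prod]
      apply Finset.prod_eq_zero (Finset.mem_range.mpr ht)
      rw [Polynomial.eval_sub, Polynomial.eval_X, Polynomial.eval_C, ap_natCast hα, sub_self]
    rw [hqz, zero_mul]
  -- the codeword
  set y : Fin n → F := fun i => ap α (-(((b:ℕ):ZMod n) * ((i:ℕ):ZMod n))) with hy
  set c : Fin n → F := fun i =>
    ap α (-(((j + M*b : ℕ):ZMod n) * ((i:ℕ):ZMod n))) * hpoly.eval (y i) with hcdef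
  have hyinj : Function.Injective y := by
    intro t₁ t₂ h
    have h1 := ap_inj hα h
    have h1' := neg_injective h1
    have hbu : IsUnit (((b:ℕ):ZMod n)) := by
      rw [← ZMod.coe_unitOfCoprime b hbn]
      exact Units.isUnit _
    have h2 := hbu.mul_right_injective h1'
    have h3 : ((t₁ : Fin n):ℕ) % n = ((t₂: Fin n):ℕ) % n := (ZMod.natCast_eq_natCast_iff _ _ _).mp h2
    rw [Nat.mod_eq_of_lt t₁.isLt, Nat.mod_eq_of_lt t₂.isLt] at h3
    exact Fin.ext h3
  refine ⟨c, ?_, ?_, ?_⟩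
  · -- c ≠ 0
    intro hc0
    apply hpne
    apply Polynomial.eq_zero_of_natDegree_lt_card_of_eval_eq_zero hpoly hyinj
    · intro i
      have := congrFun hc0 i
      rw [hcdef] at this
      simp only [Pi.zero_apply] at this
      rcases mul_eq_zero.mp this with h | h
      · exact absurd h (ap_ne_zero hα _)
      · exact h
    · rw [Fintype.card_fin]
      omega
  · -- membership
    intro e he
    have hpev : ∀ z : F, hpoly.eval z = ∑ u ∈ Finset.range (DegH+1), hpoly.coeff u * z^u :=
      fun z => Polynomial.eval_eq_sum_range' (Nat.lt_succ_of_le hdeg) z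
    have hstep : ∀ i : Fin n, c i * ap α (e * ((i:ℕ):ZMod n))
        = ∑ u ∈ Finset.range (DegH+1),
            hpoly.coeff u * ap α ((e - (((j + (M+u)*b : ℕ)):ZMod n)) * ((i:ℕ):ZMod n)) := by
      intro i
      show (ap α (-(((j + M*b : ℕ):ZMod n) * ((i:ℕ):ZMod n))) * hpoly.eval (y i))
          * ap α (e * ((i:ℕ):ZMod n)) = _
      rw [hpev (y i), Finset.mul_sum, Finset.sum_mul]
      apply Finset.sum_congr rfl
      intro u _
      have hyu : (y i)^u = ap α (-(((b:ℕ):ZMod n) * ((i:ℕ):ZMod n)) * (u:ZMod n)) := by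
        rw [hy]
        simp only []
        rw [← ap_mul_natCast hα]
      rw [hyu]
      have hexp : (e - (((j + (M+u)*b : ℕ)):ZMod n)) * ((i:ℕ):ZMod n)
          = (-(((j + M*b : ℕ):ZMod n) * ((i:ℕ):ZMod n)))
            + ((-(((b:ℕ):ZMod n) * ((i:ℕ):ZMod n)) * (u:ZMod n)) + e * ((i:ℕ):ZMod n)) := by
        push_cast
        ring
      rw [hexp, ap_add hα, ap_add hα]
      ring
    rw [Finset.sum_congr rfl (fun i _ => hstep i), Finset.sum_comm]
    apply Finset.sum_eq_zero
    intro u hu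
    rw [Finset.mem_range] at hu
    have hfact : ∑ i : Fin n,
        hpoly.coeff u * ap α ((e - (((j + (M+u)*b : ℕ)):ZMod n)) * ((i:ℕ):ZMod n))
        = hpoly.coeff u *
          (if (e - (((j + (M+u)*b : ℕ)):ZMod n)) = 0 then (n:F) else 0) := by
      rw [← Finset.mul_sum, sum_ap hα]
    rw [hfact]
    by_cases hcase : e = (((j + (M+u)*b : ℕ)):ZMod n)
    · -- show the coefficient vanishes / impossible
      rw [Finset.mem_union] at he
      rcases he with heL | heD
      · -- ElF case : coeff u = 0
        have hmem : (((j + (M+u)*b : ℕ)):ZMod n) ∈ ElF n r l := hcase ▸ heL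
        have hdvd : (r+1) ∣ (M+u) := (shifted_mem_ElF_iff hrn hl hbn hjl (M+u)).mp hmem
        obtain ⟨v, hv⟩ := hMr
        obtain ⟨w2, hw2⟩ := hdvd
        have hwv : v < w2 := by
          by_contra hcon
          push_neg at hcon
          have := Nat.mul_le_mul_left (r+1) hcon
          have h8 : (r+1)*v = v*(r+1) := mul_comm _ _
          omega
        set z := w2 - v - 1 with hz
        have hw2eq : w2 = v + 1 + z := by omega
        have hexpand : (r+1)*(v+1+z) = v*(r+1) + (r+1) + z*(r+1) := by ring
        have huval : u = z*(r+1) + r := by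
          rw [hw2eq, hexpand] at hw2
          omega
        have humod : u % (r+1) = r := by
          rw [huval, Nat.add_comm, Nat.add_mul_mod_self_right, Nat.mod_eq_of_lt (by omega)]
        rw [hsupp u humod, zero_mul]
      · -- EDF case : impossible
        exfalso
        obtain ⟨s, hs, hse⟩ := Finset.mem_image.mp heD
        rw [Finset.mem_range] at hs
        have heq : ((j + s*b : ℕ) : ZMod n) = ((j + (M+u)*b : ℕ) : ZMod n) := by
          rw [hse]; exact hcase
        have := EDF_inj_aux (j := j) (M := n) hbn le_rfl
          (by omega : s < n) (by omega : M + u < n) heq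
        omega
    · rw [if_neg (by rwa [sub_eq_zero]), mul_zero]
  · -- weight bound
    rw [Nat.card_eq_fintype_card, Fintype.card_subtype]
    -- the zero set contains the image of the root exponents
    set R1 : Finset ℕ := (Finset.range (μ-1) ×ˢ Finset.range (r+1)).image
        (fun p => (p.1+1) + p.2*n') with hR1
    set R2 : Finset ℕ := (Finset.range (r-1)).image (fun t => (t+1)*n') with hR2
    have hn'pos : 0 < n' := by
      rcases Nat.eq_zero_or_pos n' with h0 | h; · rw [h0, zero_mul] at hn'; omega
      exact h
    have hmodR1 : ∀ a t : ℕ, a < μ-1 → ((a+1) + t*n') % n' = a+1 := by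
      intro a t ha
      rw [Nat.add_mul_mod_self_right, Nat.mod_eq_of_lt (by omega)]
    have hdivR1 : ∀ a t : ℕ, a < μ-1 → ((a+1) + t*n') / n' = t := by
      intro a t ha
      rw [Nat.add_mul_div_right _ _ hn'pos, Nat.div_eq_of_lt (by omega), Nat.zero_add]
    have hcardR1 : R1.card = (μ-1)*(r+1) := by
      rw [hR1, Finset.card_image_of_injOn, Finset.card_product, Finset.card_range,
        Finset.card_range]
      intro p hp q hq hpq
      rw [Finset.mem_coe, Finset.mem_product, Finset.mem_range, Finset.mem_range] at hp hq
      have h1 := congrArg (· % n') hpq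
      have h2 := congrArg (· / n') hpq
      simp only [] at h1 h2
      rw [hmodR1 _ _ hp.1, hmodR1 _ _ hq.1] at h1
      rw [hdivR1 _ _ hp.1, hdivR1 _ _ hq.1] at h2
      exact Prod.ext (by omega) h2
    have hcardR2 : R2.card = r-1 := by
      rw [hR2, Finset.card_image_of_injOn, Finset.card_range]
      intro t₁ h₁ t₂ h₂ he
      simp only [] at he
      have := Nat.eq_of_mul_eq_mul_right hn'pos he
      omega
    have hdisj : Disjoint R1 R2 := by
      rw [Finset.disjoint_left]
      intro x hx1 hx2
      obtain ⟨p, hp, rfl⟩ := Finset.mem_image.mp hx1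
      rw [Finset.mem_product, Finset.mem_range, Finset.mem_range] at hp
      obtain ⟨t, ht, hte⟩ := Finset.mem_image.mp hx2
      have h1 : ((p.1+1) + p.2*n') % n' = p.1+1 := hmodR1 _ _ hp.1
      have h2 : ((t+1)*n') % n' = 0 := Nat.mul_mod_left _ _
      rw [hte] at h2
      omega
    have hcardU : (R1 ∪ R2).card = DegH := by
      rw [Finset.card_union_of_disjoint hdisj, hcardR1, hcardR2]
    have hbnd : ∀ x ∈ R1 ∪ R2, x < n ∧ hpoly.eval (α ^ x) = 0 := by
      intro x hx
      rw [Finset.mem_union] at hx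
      rcases hx with hx | hx
      · obtain ⟨p, hp, rfl⟩ := Finset.mem_image.mp hx
        rw [Finset.mem_product, Finset.mem_range, Finset.mem_range] at hp
        constructor
        · have h3 : p.2*n' ≤ r*n' := Nat.mul_le_mul_right _ (by omega)
          have h4 : (r+1)*n' = n := by rw [mul_comm]; exact hn'
          have h5 : (r+1)*n' = r*n' + n' := by ring
          omega
        · exact hrootR1 p.1 p.2 hp.1 hp.2
      · obtain ⟨t, ht, rfl⟩ := Finset.mem_image.mp hx
        rw [Finset.mem_range] at ht
        constructor
        · have h3 : (t+1)*n' ≤ r*n' := Nat.mul_le_mul_right _ (by omega)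
          have h4 : (r+1)*n' = n := by rw [mul_comm]; exact hn'
          have h5 : (r+1)*n' = r*n' + n' := by ring
          omega
        · exact hrootR2 t ht
    -- injection into zero coordinates
    let bu : (ZMod n)ˣ := ZMod.unitOfCoprime b hbn
    let ι : ℕ → Fin n := fun x => ⟨((-(x : ZMod n)) * ((bu⁻¹ : (ZMod n)ˣ) : ZMod n)).val,
      ZMod.val_lt _⟩
    have hι_y : ∀ x : ℕ, y (ι x) = α ^ x := by
      intro x
      rw [hy]
      simp only []
      have hcast : (((ι x : Fin n) : ℕ) : ZMod n) = (-(x : ZMod n)) * ((bu⁻¹ : (ZMod n)ˣ) : ZMod n) :=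
        ZMod.natCast_rightInverse _
      rw [hcast]
      have hbu : (((b:ℕ)):ZMod n) = (bu : ZMod n) := (ZMod.coe_unitOfCoprime b hbn).symm
      rw [hbu]
      have : -((bu : ZMod n) * ((-(x : ZMod n)) * ((bu⁻¹ : (ZMod n)ˣ) : ZMod n))) = (x : ZMod n) := by
        have hinv : (bu : ZMod n) * ((bu⁻¹ : (ZMod n)ˣ) : ZMod n) = 1 := bu.mul_inv
        calc -((bu : ZMod n) * ((-(x : ZMod n)) * ((bu⁻¹ : (ZMod n)ˣ) : ZMod n)))
            = ((bu : ZMod n) * ((bu⁻¹ : (ZMod n)ˣ) : ZMod n)) * (x : ZMod n) := by ring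
          _ = (x : ZMod n) := by rw [hinv, one_mul]
      rw [this, ap_natCast hα]
    have hι_inj : Set.InjOn ι ↑(R1 ∪ R2) := by
      intro x₁ h₁ x₂ h₂ he
      have hy1 : y (ι x₁) = y (ι x₂) := by rw [he]
      rw [hι_y, hι_y] at hy1
      have h3 : α ^ (x₁ % n) = α ^ (x₂ % n) := by rw [pow_mod hα, pow_mod hα, hy1]
      have h4 := hα.pow_inj (Nat.mod_lt _ npos) (Nat.mod_lt _ npos) h3
      have b1 := (hbnd x₁ (Finset.mem_coe.mp h₁)).1
      have b2 := (hbnd x₂ (Finset.mem_coe.mp h₂)).1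
      rw [Nat.mod_eq_of_lt b1, Nat.mod_eq_of_lt b2] at h4
      exact h4
    have hzero_sub : (R1 ∪ R2).image ι ⊆ Finset.univ.filter (fun i : Fin n => ¬ c i ≠ 0) := by
      intro i hi
      obtain ⟨x, hx, rfl⟩ := Finset.mem_image.mp hi
      rw [Finset.mem_filter]
      refine ⟨Finset.mem_univ _, ?_⟩
      rw [not_not, hcdef]
      simp only []
      rw [hι_y, (hbnd x hx).2, mul_zero]
    have hcount := Finset.card_filter_add_card_filter_not
      (s := (Finset.univ : Finset (Fin n))) (fun i : Fin n => c i ≠ 0)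
    rw [Finset.card_univ, Fintype.card_fin] at hcount
    have hge : DegH ≤ (Finset.univ.filter (fun i : Fin n => ¬ c i ≠ 0)).card := by
      calc DegH = ((R1 ∪ R2).image ι).card := by
            rw [Finset.card_image_of_injOn hι_inj, hcardU]
        _ ≤ _ := Finset.card_le_card hzero_sub
    omega



end AuxLRC

/-- the cyclic code with defining set of zeros `L ∪ D` is an optimal (n,k,r)
cyclic LRC code. -/
theorem stmt3 {F : Type*} [Field F] [Fintype F] (q n r k μ l b : ℕ) [NeZero n]
    (hq : Fintype.card F = q) (hn : n ∣ q - 1)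
    (α : F) (hα : IsPrimitiveRoot α n)
    (hr : 0 < r) (hk : 0 < k) (hrk : r ∣ k) (hrn : (r + 1) ∣ n)
    (hμ : μ = k / r) (hμn : μ * (r + 1) ≤ n)
    (hl : l ≤ r) (hb : 1 ≤ b) (hbn : Nat.Coprime b n)
    (L D : Set F)
    (hL : L = {β | ∃ i : ℕ, i % (r + 1) = l ∧ β = α ^ i})
    (j : ℕ) (hj : α ^ j ∈ L)
    (hD : D = {β | ∃ s : ℕ, s ≤ n - μ * (r + 1) ∧ β = α ^ (j + s * b)}) :
    IsCyclicCode (codeOfZeros n (L ∪ D)) ∧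
    Module.finrank F (codeOfZeros n (L ∪ D)) = k ∧
    HasLocality (codeOfZeros n (L ∪ D)) r ∧
    minDist (codeOfZeros n (L ∪ D)) = n - k - k / r + 2 := by
  have npos : 0 < n := Nat.pos_of_ne_zero (NeZero.ne n)
  have hnF : (n : F) ≠ 0 := n_ne_zero_F hq hn
  have hjl : j % (r+1) = l := j_mod hα hrn hl hL hj
  have hμ1 : 1 ≤ μ := by
    rw [hμ]
    exact (Nat.one_le_div_iff hr).mpr (Nat.le_of_dvd hk hrk)
  have hkr : k = μ * r := by
    rw [hμ, Nat.div_mul_cancel hrk]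
  set M := n - μ*(r+1) + 1 with hMdef
  have hμrr : μ*(r+1) = μ*r + μ := by ring
  have h1μ : 1 ≤ μ*(r+1) := Nat.one_le_iff_ne_zero.mpr (by positivity)
  have hMn : M ≤ n := by omega
  have hLD : L ∪ D = ap α ''
      (((ElF n r l ∪ EDF n j b M : Finset (ZMod n)) : Set (ZMod n))) := by
    rw [hL, hD, Finset.coe_union, Set.image_union, L_eq hα hrn hl, D_eq hα (j := j) hMdef]
  constructor
  · -- cyclic
    apply isCyclic_codeOfZeros_of
    intro β hβ
    rw [hLD] at hβ
    obtain ⟨e, _, rfl⟩ := hβ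
    show (α ^ e.val) ^ n = 1
    rw [← pow_mul, mul_comm, pow_mul, hα.pow_eq_one, one_pow]
  constructor
  · -- dimension
    rw [hLD, finrank_codeOfZeros hα hnF, card_union hrn hl hbn hjl hμ1 hμn hkr hMdef]
    have hkn : k ≤ n := by omega
    omega
  constructor
  · -- locality
    intro i₀
    unfold IsRecoverySet
    obtain ⟨A, hcard, hnotin, φ, hφ⟩ := locality_recover hα hnF hrn hl
      (ap α '' ((EDF n j b M : Finset (ZMod n)) : Set (ZMod n))) i₀
    refine ⟨A, hcard, hnotin, φ, ?_⟩
    intro c hc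
    apply hφ
    rwa [hLD, Finset.coe_union, Set.image_union] at hc
  · -- minimum distance
    unfold minDist hwt
    have hlow : ∀ c ∈ codeOfZeros n (L ∪ D), c ≠ 0 → M + 1 ≤ hwt c := by
      intro c hc hcne
      show M + 1 ≤ Nat.card {i : Fin n // c i ≠ 0}
      refine bch_bound (j := j) hα hbn hMn c ?_ hcne
      intro e he
      rw [hLD] at hc
      exact (mem_code_ap_iff hα _ c).mp hc e (Finset.mem_union_right _ he)
    obtain ⟨c₀, hc0ne, hc0mem, hc0wt⟩ :=
      exists_low_weight hα hnF hrn hr hl hbn hjl hμ1 hμn hMdef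
    have hc0code : c₀ ∈ codeOfZeros n (L ∪ D) := by
      rw [hLD]
      exact (mem_code_ap_iff hα _ c₀).mpr hc0mem
    have hwt0 : hwt c₀ = M + 1 := le_antisymm hc0wt (hlow c₀ hc0code hc0ne)
    have hd : n - k - k / r + 2 = M + 1 := by
      rw [← hμ]
      omega
    rw [hd]
    apply le_antisymm
    · exact Nat.sInf_le (show (M+1) ∈ {w | ∃ c ∈ codeOfZeros n (L ∪ D), c ≠ 0 ∧ hwt c = w}
        from ⟨c₀, hc0code, hc0ne, hwt0⟩)
    · apply le_csInf ⟨M+1, show (M+1) ∈ {w | ∃ c ∈ codeOfZeros n (L ∪ D), c ≠ 0 ∧ hwt c = w}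
        from ⟨c₀, hc0code, hc0ne, hwt0⟩⟩
      rintro w ⟨c, hc, hcne, rfl⟩
      exact hlow c hc hcne


end LRC
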